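/- Let G be a bipartite graph, M a maximum matching in G, and 𝓞, 𝓤 the sets of odd and unreachable vertices with respect to M. Then no maximum matching of G contains an edge with one endpoint in 𝓞 and the other endpoint in 𝓞 ∪ 𝓤. -/

import Mathlib

open SimpleGraph

variable {V : Type*}

/-- `M` is a matching in the graph `G`: a set of edges of `G` no two of which
share a vertex. -/
def IsMatchingIn (G : SimpleGraph V) (M : Set (Sym2 V)) : Prop :=
  M ⊆ G.edgeSet ∧ ∀ e ∈ M, ∀ f ∈ M, e ≠ f → ∀ v : V, v ∈ e → v ∉ f

/-- A vertex `v` is matched (covered) by the matching `M`. -/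
def IsMatchedBy (M : Set (Sym2 V)) (v : V) : Prop :=
  ∃ e ∈ M, v ∈ e

/-- The list of edges of a path given as a list of vertices. -/
def pathEdges (p : List V) : List (Sym2 V) :=
  (p.zip p.tail).map fun q => s(q.1, q.2)

/-- `p` is an alternating path from `u` to `v` in `G` with respect to the matching `M`:
its consecutive vertices are adjacent in `G`, it repeats no vertex, and its edges
alternate between edges in `M` and edges not in `M`. -/
def IsAltPath (G : SimpleGraph V) (M : Set (Sym2 V)) (u v : V) (p : List V) : Prop :=
  p.Chain' G.Adj ∧ p.Nodup ∧
    (pathEdges p).Chain' (fun e f => (e ∈ M ↔ f ∉ M)) ∧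
    p.head? = some u ∧ p.getLast? = some v

/-- `v` is even with respect to `M`: there is an even-length alternating path from
an `M`-unmatched vertex to `v`. -/
def EvenVtx (G : SimpleGraph V) (M : Set (Sym2 V)) (v : V) : Prop :=
  ∃ u p, ¬ IsMatchedBy M u ∧ IsAltPath G M u v p ∧ Even (pathEdges p).length

/-- `v` is odd with respect to `M`: there is an odd-length alternating path from
an `M`-unmatched vertex to `v`. -/
def OddVtx (G : SimpleGraph V) (M : Set (Sym2 V)) (v : V) : Prop :=
  ∃ u p, ¬ IsMatchedBy M u ∧ IsAltPath G M u v p ∧ Odd (pathEdges p).length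

/-- `v` is unreachable with respect to `M`: there is no alternating path from any
`M`-unmatched vertex to `v`. -/
def UnreachableVtx (G : SimpleGraph V) (M : Set (Sym2 V)) (v : V) : Prop :=
  ¬ ∃ u p, ¬ IsMatchedBy M u ∧ IsAltPath G M u v p

/-- `M` is a maximum (cardinality) matching in `G`. -/
def IsMaxMatching (G : SimpleGraph V) (M : Set (Sym2 V)) : Prop :=
  IsMatchingIn G M ∧ ∀ N, IsMatchingIn G N → N.ncard ≤ M.ncard

/-- `G` is bipartite with the two sides given by `side`. -/
def IsBipartiteWith (G : SimpleGraph V) (side : V → Bool) : Prop :=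
  ∀ u v, G.Adj u v → side u ≠ side v

/-! ### Auxiliary: alternating walks as functions `ℕ → V` -/

/-- An alternating walk of `n` edges, starting at an unmatched vertex, given as a
function `ℕ → V` (only values at `0..n` matter). Edge `i` is in `M` iff `i` is odd. -/
def AltWalkF (G : SimpleGraph V) (M : Set (Sym2 V)) (f : ℕ → V) (n : ℕ) : Prop :=
  (∀ i < n, G.Adj (f i) (f (i+1))) ∧
  (∀ i < n, (s(f i, f (i+1)) ∈ M ↔ i % 2 = 1)) ∧
  ¬ IsMatchedBy M (f 0)

/-- `v` is reachable by an alternating walk whose number of edges has parity `b`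
(`tt` = odd). -/
def Rch (G : SimpleGraph V) (M : Set (Sym2 V)) (v : V) (b : Bool) : Prop :=
  ∃ f n, AltWalkF G M f n ∧ f n = v ∧ (n % 2 = if b then 1 else 0)

lemma pathEdges_length (p : List V) : (pathEdges p).length = p.length - 1 := by
  simp [pathEdges]

lemma pathEdges_get (p : List V) (i : ℕ) (h : i + 1 < p.length) :
    (pathEdges p).get ⟨i, by simp [pathEdges_length]; omega⟩ =
      s(p.get ⟨i, by omega⟩, p.get ⟨i+1, h⟩) := by
  simp [pathEdges, List.getElem_zip, List.getElem_tail]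

lemma altPath_to_walk {G : SimpleGraph V} {M : Set (Sym2 V)} {u v : V} {p : List V}
    (hp : IsAltPath G M u v p) (hu : ¬ IsMatchedBy M u) :
    ∃ f n, AltWalkF G M f n ∧ f 0 = u ∧ f n = v ∧ n + 1 = p.length := by
  obtain ⟨hadj, -, halt, hhead, hlast⟩ := hp
  have hne : p ≠ [] := by rintro rfl; simp at hhead
  have hlen : 0 < p.length := List.length_pos_iff.mpr hne
  set g : ℕ → V := fun k => p.getD k u with hg
  have hgk : ∀ (k : ℕ) (h : k < p.length), p[k] = g k := by
    intro k h
    simp only [hg]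
    exact (List.getD_eq_getElem _ _ h).symm
  have hg0 : g 0 = u := by
    rw [List.head?_eq_getElem?, List.getElem?_eq_getElem hlen] at hhead
    rw [← hgk 0 hlen]
    exact Option.some_injective _ hhead
  have hglast : g (p.length - 1) = v := by
    rw [List.getLast?_eq_getElem?,
      List.getElem?_eq_getElem (show p.length - 1 < p.length by omega)] at hlast
    rw [← hgk _ (show p.length - 1 < p.length by omega)]
    exact Option.some_injective _ hlast
  have hadj' : ∀ i < p.length - 1, G.Adj (g i) (g (i+1)) := by
    intro i hi
    have := List.isChain_iff_getElem.mp hadj i (by omega)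
    simp only [List.get_eq_getElem, hgk] at this
    exact this
  have halt' : ∀ i < p.length - 1, (s(g i, g (i+1)) ∈ M ↔ i % 2 = 1) := by
    intro i
    induction i with
    | zero =>
      intro hi
      have h0 : s(g 0, g 1) ∉ M := by
        intro hmem
        exact hu ⟨s(g 0, g 1), hmem, by rw [hg0]; exact Sym2.mem_mk_left _ _⟩
      simp [h0]
    | succ j ih =>
      intro hi
      have ihh := ih (by omega)
      have hc := List.isChain_iff_getElem.mp halt j (by rw [pathEdges_length]; omega)
      have e1 := pathEdges_get p j (by omega)
      have e2 := pathEdges_get p (j+1) (by omega)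
      simp only [List.get_eq_getElem] at e1 e2
      rw [e1, e2] at hc
      simp only [List.get_eq_getElem, hgk] at hc
      have hpar : (j+1) % 2 = 1 ↔ ¬ (j % 2 = 1) := by omega
      rw [hpar]
      by_cases hj : j % 2 = 1
      · have h2 : s(g (j+1), g (j+1+1)) ∉ M := hc.mp (ihh.mpr hj)
        simp [h2, hj]
      · have h2 : s(g (j+1), g (j+1+1)) ∈ M := by
          by_contra hcon
          exact hj (ihh.mp (hc.mpr hcon))
        simp [h2, hj]
  exact ⟨g, p.length - 1, ⟨hadj', halt', by rw [hg0]; exact hu⟩, hg0, hglast, by omega⟩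

lemma walk_to_altPath {G : SimpleGraph V} {M : Set (Sym2 V)} {f : ℕ → V} {n : ℕ}
    (hw : AltWalkF G M f n) (hinj : Set.InjOn f (Set.Iic n)) :
    ∃ p, IsAltPath G M (f 0) (f n) p ∧ (pathEdges p).length = n := by
  obtain ⟨hadj, halt, hun⟩ := hw
  set p : List V := List.ofFn (fun i : Fin (n+1) => f i) with hp
  have hlen : p.length = n + 1 := by simp [hp]
  have hget : ∀ (k : ℕ) (h : k < p.length), p[k] = f k := by
    intro k h
    simp only [hp, List.getElem_ofFn]
  refine ⟨p, ⟨?_, ?_, ?_, ?_, ?_⟩, by rw [pathEdges_length, hlen]; omega⟩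
  · refine List.isChain_iff_getElem.mpr ?_
    intro i hi
    rw [hlen] at hi
    simp only [List.get_eq_getElem, hget]
    exact hadj i (by omega)
  · rw [hp, List.nodup_ofFn]
    intro a b hab
    exact Fin.ext (hinj (by simp only [Set.mem_Iic]; omega : (a:ℕ) ∈ Set.Iic n)
      (by simp only [Set.mem_Iic]; omega : (b:ℕ) ∈ Set.Iic n) hab)
  · refine List.isChain_iff_getElem.mpr ?_
    intro i hi
    rw [pathEdges_length, hlen] at hi
    have e1 := pathEdges_get p i (by omega)
    have e2 := pathEdges_get p (i+1) (by omega)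
    simp only [List.get_eq_getElem] at e1 e2
    rw [e1, e2]
    simp only [List.get_eq_getElem, hget]
    rw [halt i (by omega), halt (i+1) (by omega)]
    omega
  · rw [List.head?_eq_getElem?, List.getElem?_eq_getElem (by omega : 0 < p.length)]
    exact congrArg some (hget 0 (by omega))
  · rw [List.getLast?_eq_getElem?,
      List.getElem?_eq_getElem (by omega : p.length - 1 < p.length)]
    refine congrArg some ?_
    rw [hget (p.length - 1) (by omega), hlen]
    exact congrArg f (by omega)
lemma walk_side {G : SimpleGraph V} {side : V → Bool}
    (hbip : IsBipartiteWith G side) {f : ℕ → V} {n : ℕ}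
    (hadj : ∀ i < n, G.Adj (f i) (f (i+1))) :
    ∀ k ≤ n, side (f k) = xor (decide (k % 2 = 1)) (side (f 0)) := by
  intro k
  induction k with
  | zero => simp
  | succ j ih =>
    intro hj
    have hs := hbip _ _ (hadj j (by omega))
    have ihh := ih (by omega)
    have hpar : decide ((j+1) % 2 = 1) = ! decide (j % 2 = 1) := by
      rcases Nat.even_or_odd j with h | h
      · have he := Nat.even_iff.mp h
        have h1 : ¬ (j % 2 = 1) := by omega
        have h2 : (j+1) % 2 = 1 := by omega
        simp [h1, h2]
      · have h1 : j % 2 = 1 := Nat.odd_iff.mp h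
        have h2 : ¬ ((j+1) % 2 = 1) := by omega
        simp [h1, h2]
    rw [hpar]
    rcases Bool.eq_false_or_eq_true (side (f (j+1))) with h | h <;>
      rcases Bool.eq_false_or_eq_true (side (f j)) with h' | h' <;>
        simp_all <;> cases side (f 0) <;> simp_all

/-- Shortcutting an alternating walk to an injective one (needs bipartiteness to
preserve alternation and parity). -/
lemma walk_splice {G : SimpleGraph V} {M : Set (Sym2 V)} {side : V → Bool}
    (hbip : IsBipartiteWith G side) :
    ∀ n (f : ℕ → V), AltWalkF G M f n →
      ∃ f' n', AltWalkF G M f' n' ∧ f' 0 = f 0 ∧ f' n' = f n ∧ n' % 2 = n % 2 ∧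
        Set.InjOn f' (Set.Iic n') := by
  intro n
  induction n using Nat.strong_induction_on with
  | _ n IH =>
    intro f hw
    by_cases hinj : Set.InjOn f (Set.Iic n)
    · exact ⟨f, n, hw, rfl, rfl, rfl, hinj⟩
    · simp only [Set.InjOn, not_forall] at hinj
      obtain ⟨a, ha, b, hb, hfab, hab⟩ := hinj
      simp only [Set.mem_Iic] at ha hb
      -- wlog a < b
      obtain ⟨i, j, hij, hj, hfij⟩ : ∃ i j, i < j ∧ j ≤ n ∧ f i = f j := by
        rcases Nat.lt_or_ge a b with h | h
        · exact ⟨a, b, h, hb, hfab⟩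
        · exact ⟨b, a, by omega, ha, hfab.symm⟩
      obtain ⟨hadj, halt, hun⟩ := hw
      -- parity: i ≡ j mod 2
      have hside := walk_side hbip hadj
      have hpar : i % 2 = j % 2 := by
        have h1 := hside i (by omega)
        have h2 := hside j hj
        rw [hfij] at h1
        rw [h1] at h2
        by_cases hi2 : i % 2 = 1 <;> by_cases hj2 : j % 2 = 1 <;>
          simp [hi2, hj2] at h2 ⊢ <;> omega
      set d := j - i with hd
      have hd0 : 0 < d := by omega
      set f' : ℕ → V := fun k => if k < i then f k else f (k + d) with hf'
      have hf'val : ∀ k, i ≤ k → f' k = f (k + d) := by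
        intro k hk; simp [hf', Nat.not_lt.mpr hk]
      have hf'val2 : ∀ k, k < i → f' k = f k := by
        intro k hk; simp [hf', hk]
      have hkey : ∀ k, f' k = f k ∨ f' k = f (k + d) := by
        intro k
        by_cases h : k < i
        · exact Or.inl (hf'val2 k h)
        · exact Or.inr (hf'val k (by omega))
      have hsucc : ∀ k, i ≤ k + 1 → f' (k+1) = f (k + 1 + d) := by
        intro k hk
        exact hf'val (k+1) hk
      have hw' : AltWalkF G M f' (n - d) := by
        refine ⟨?_, ?_, ?_⟩
        · intro k hk
          rcases Nat.lt_or_ge (k+1) i with h | h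
          · rw [hf'val2 k (by omega), hf'val2 (k+1) h]
            exact hadj k (by omega)
          · rw [hsucc k h]
            rcases Nat.lt_or_ge k i with h' | h'
            · rw [hf'val2 k h']
              have hki : k + 1 = i := by omega
              have : k + 1 + d = j := by omega
              rw [this, ← hfij, ← hki]
              exact hadj k (by omega)
            · rw [hf'val k h']
              have hcm : k + 1 + d = k + d + 1 := by omega
              rw [hcm]
              exact hadj (k + d) (by omega)
        · intro k hk
          rcases Nat.lt_or_ge (k+1) i with h | h
          · rw [hf'val2 k (by omega), hf'val2 (k+1) h]
            exact halt k (by omega)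
          · rw [hsucc k h]
            rcases Nat.lt_or_ge k i with h' | h'
            · rw [hf'val2 k h']
              have hki : k + 1 = i := by omega
              have hjj : k + 1 + d = j := by omega
              rw [hjj, ← hfij, ← hki]
              exact halt k (by omega)
            · rw [hf'val k h']
              have hdpar : d % 2 = 0 := by omega
              have hh := halt (k + d) (by omega)
              have hcm : k + 1 + d = k + d + 1 := by omega
              rw [hcm, hh]
              omega
        · have : f' 0 = f 0 := by
            rcases Nat.lt_or_ge 0 i with h | h
            · exact hf'val2 0 h
            · rw [hf'val 0 h]
              have : i = 0 := by omega
              have hj0 : 0 + d = j := by omega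
              rw [hj0, ← hfij, this]
          rw [this]
          exact hun
      have hlt : n - d < n := by omega
      obtain ⟨g, m, hg, hg0, hgl, hgpar, hginj⟩ := IH (n - d) hlt f' hw'
      refine ⟨g, m, hg, ?_, ?_, ?_, hginj⟩
      · rw [hg0]
        rcases Nat.lt_or_ge 0 i with h | h
        · exact hf'val2 0 h
        · rw [hf'val 0 h]
          have h0 : i = 0 := by omega
          have hj0 : 0 + d = j := by omega
          rw [hj0, ← hfij, h0]
      · rw [hgl, hf'val (n - d) (by omega)]
        congr 1
        omega
      · rw [hgpar]
        omega

lemma rch_iff_even {G : SimpleGraph V} {M : Set (Sym2 V)} {side : V → Bool}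
    (hbip : IsBipartiteWith G side) (v : V) :
    EvenVtx G M v ↔ Rch G M v false := by
  constructor
  · rintro ⟨u, p, hu, hp, hev⟩
    obtain ⟨f, n, hw, hf0, hfn, hn⟩ := altPath_to_walk hp hu
    refine ⟨f, n, hw, hfn, ?_⟩
    rw [pathEdges_length] at hev
    have : n = p.length - 1 := by omega
    have hev2 := Nat.even_iff.mp hev
    simp only [if_neg Bool.false_ne_true]
    omega
  · rintro ⟨f, n, hw, hfn, hn⟩
    obtain ⟨f', n', hw', h0, hl, hpar, hinj⟩ := walk_splice hbip n f hw
    obtain ⟨p, hp, hplen⟩ := walk_to_altPath hw' hinj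
    refine ⟨f' 0, p, ?_, by rw [hl, hfn] at hp; exact hp, ?_⟩
    · exact hw'.2.2
    · rw [hplen, Nat.even_iff]
      simp at hn
      omega

lemma rch_iff_odd {G : SimpleGraph V} {M : Set (Sym2 V)} {side : V → Bool}
    (hbip : IsBipartiteWith G side) (v : V) :
    OddVtx G M v ↔ Rch G M v true := by
  constructor
  · rintro ⟨u, p, hu, hp, hodd⟩
    obtain ⟨f, n, hw, hf0, hfn, hn⟩ := altPath_to_walk hp hu
    refine ⟨f, n, hw, hfn, ?_⟩
    rw [pathEdges_length] at hodd
    have hodd2 := Nat.odd_iff.mp hodd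
    simp only [if_pos]
    omega
  · rintro ⟨f, n, hw, hfn, hn⟩
    obtain ⟨f', n', hw', h0, hl, hpar, hinj⟩ := walk_splice hbip n f hw
    obtain ⟨p, hp, hplen⟩ := walk_to_altPath hw' hinj
    refine ⟨f' 0, p, hw'.2.2, by rw [hl, hfn] at hp; exact hp, ?_⟩
    rw [hplen, Nat.odd_iff]
    simp at hn
    omega

lemma rch_reachable {G : SimpleGraph V} {M : Set (Sym2 V)} {side : V → Bool}
    (hbip : IsBipartiteWith G side) {v : V} {b : Bool} (h : Rch G M v b) :
    ∃ u p, ¬ IsMatchedBy M u ∧ IsAltPath G M u v p := by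
  obtain ⟨f, n, hw, hfn, hn⟩ := h
  obtain ⟨f', n', hw', h0, hl, hpar, hinj⟩ := walk_splice hbip n f hw
  obtain ⟨p, hp, hplen⟩ := walk_to_altPath hw' hinj
  exact ⟨f' 0, p, hw'.2.2, by rw [hl, hfn] at hp; exact hp⟩

lemma unmatched_rch {G : SimpleGraph V} {M : Set (Sym2 V)} {v : V}
    (h : ¬ IsMatchedBy M v) : Rch G M v false :=
  ⟨fun _ => v, 0, ⟨fun i h => by omega, fun i h => by omega, h⟩, rfl, by simp⟩

/-- Extension of a walk by one edge. -/
lemma rch_ext {G : SimpleGraph V} {M : Set (Sym2 V)} {v w : V} {b : Bool}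
    (h : Rch G M v b) (hadj : G.Adj v w)
    (hmem : s(v, w) ∈ M ↔ b = true) : Rch G M w (!b) := by
  obtain ⟨f, n, ⟨hadjf, haltf, hun⟩, hfn, hn⟩ := h
  refine ⟨fun k => if k = n + 1 then w else f k, n + 1, ⟨?_, ?_, ?_⟩, by simp, ?_⟩
  · intro i hi
    rcases Nat.lt_or_ge i n with h' | h'
    · simpa [show ¬ (i = n+1) by omega, show ¬ (i+1 = n+1) by omega, show ¬ (i = n) by omega] using hadjf i h'
    · have : i = n := by omega
      subst this
      simpa [show ¬ (i = i+1) by omega, hfn] using hadj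
  · intro i hi
    rcases Nat.lt_or_ge i n with h' | h'
    · simpa [show ¬ (i = n+1) by omega, show ¬ (i+1 = n+1) by omega, show ¬ (i = n) by omega] using haltf i h'
    · have : i = n := by omega
      subst this
      simp only [show ¬ (i = i+1) by omega, if_neg, if_pos, reduceIte, hfn]
      cases b <;> simp_all <;> omega
  · simpa [show ¬ (0 = n+1) by omega] using hun
  · cases b <;> simp_all <;> omega

/-- Truncation: if `v` is evenly reachable and `s(v,w) ∈ M` then `w` is oddly
reachable (the last walk edge must be `s(v,w)`). -/
lemma rch_trunc {G : SimpleGraph V} {M : Set (Sym2 V)}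
    (hGM : IsMatchingIn G M) {v w : V}
    (h : Rch G M v false) (hmem : s(v, w) ∈ M) : Rch G M w true := by
  obtain ⟨f, n, ⟨hadjf, haltf, hun⟩, hfn, hn⟩ := h
  rcases Nat.eq_zero_or_pos n with h0 | h0
  · exfalso
    subst h0
    exact hun ⟨s(v, w), hmem, by rw [hfn]; exact Sym2.mem_mk_left _ _⟩
  · -- last edge is in M and contains v
    have hlast : s(f (n-1), f n) ∈ M := by
      have := haltf (n-1) (by omega)
      have hcm : n - 1 + 1 = n := by omega
      rw [hcm] at this
      rw [this]
      simp at hn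
      omega
    have heq : s(f (n-1), f n) = s(v, w) := by
      by_contra hne
      exact hGM.2 _ hlast _ hmem hne v (by rw [hfn]; exact Sym2.mem_mk_right _ _) (Sym2.mem_mk_left _ _)
    have hfn1 : f (n - 1) = w := by
      rw [hfn] at heq
      rcases Sym2.eq_iff.mp heq with ⟨h1, h2⟩ | ⟨h1, h2⟩
      · -- f (n-1) = v ∧ v = w : impossible since s(v,w) ∈ M ⊆ edgeSet
        exfalso
        have hvw := hGM.1 hmem
        rw [SimpleGraph.mem_edgeSet] at hvw
        exact hvw.ne h2
      · exact h1
    refine ⟨f, n - 1, ⟨fun i hi => hadjf i (by omega), fun i hi => haltf i (by omega), hun⟩, hfn1, ?_⟩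
    simp at hn ⊢
    omega

lemma card_filter_odd (n : ℕ) :
    ((Finset.range n).filter (fun k => k % 2 = 1)).card = n / 2 := by
  induction n with
  | zero => simp
  | succ m ih =>
    rw [Finset.range_add_one, Finset.filter_insert]
    by_cases h : m % 2 = 1
    · rw [if_pos h, Finset.card_insert_of_notMem (by simp), ih]
      omega
    · rw [if_neg h, ih]
      omega

lemma card_filter_even (n : ℕ) :
    ((Finset.range n).filter (fun k => k % 2 = 0)).card = (n + 1) / 2 := by
  induction n with
  | zero => simp
  | succ m ih =>
    rw [Finset.range_add_one, Finset.filter_insert]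
    by_cases h : m % 2 = 0
    · rw [if_pos h, Finset.card_insert_of_notMem (by simp), ih]
      omega
    · rw [if_neg h, ih]
      omega

/-- Flipping an augmenting path contradicts maximality. -/
lemma aug_flip [Finite V] {G : SimpleGraph V} {M : Set (Sym2 V)}
    (hM : IsMaxMatching G M) {f : ℕ → V} {n : ℕ}
    (hw : AltWalkF G M f n) (hodd : n % 2 = 1) (hinj : Set.InjOn f (Set.Iic n))
    (hlast : ¬ IsMatchedBy M (f n)) : False := by
  obtain ⟨hadj, halt, hun⟩ := hw
  obtain ⟨hsub, hdisj⟩ := hM.1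
  have hinj' : ∀ a b, a ≤ n → b ≤ n → f a = f b → a = b := by
    intro a b ha hb h
    exact hinj (Set.mem_Iic.mpr ha) (Set.mem_Iic.mpr hb) h
  have hne : ∀ k, k < n → f k ≠ f (k+1) := fun k hk => (hadj k hk).ne
  have edge_inj : ∀ k l, k < n → l < n → s(f k, f (k+1)) = s(f l, f (l+1)) → k = l := by
    intro k l hk hl h
    rcases Sym2.eq_iff.mp h with ⟨h1, h2⟩ | ⟨h1, h2⟩
    · exact hinj' k l (by omega) (by omega) h1
    · have e1 := hinj' k (l+1) (by omega) (by omega) h1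
      have e2 := hinj' (k+1) l (by omega) (by omega) h2
      omega
  set F : Set (Sym2 V) := {e | ∃ k, k < n ∧ e = s(f k, f (k+1))} with hF
  have hFedge : F ⊆ G.edgeSet := by
    rintro e ⟨k, hk, rfl⟩
    exact (hadj k hk)
  -- any M-edge touching a walk vertex is a walk edge
  have hcov : ∀ e ∈ M, ∀ k, k ≤ n → f k ∈ e → e ∈ F := by
    intro e he k hk hfk
    rcases Nat.eq_zero_or_pos k with rfl | hk0
    · exact absurd ⟨e, he, hfk⟩ hun
    rcases Nat.lt_or_ge k n with hkn | hkn
    · by_cases hpar : k % 2 = 1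
      · have hm : s(f k, f (k+1)) ∈ M := (halt k hkn).mpr hpar
        have : e = s(f k, f (k+1)) := by
          by_contra hne'
          exact hdisj e he _ hm hne' (f k) hfk (Sym2.mem_mk_left _ _)
        exact ⟨k, hkn, this⟩
      · have hm : s(f (k-1), f (k-1+1)) ∈ M := (halt (k-1) (by omega)).mpr (by omega)
        have hk1 : k - 1 + 1 = k := by omega
        have : e = s(f (k-1), f (k-1+1)) := by
          by_contra hne'
          refine hdisj e he _ hm hne' (f k) hfk ?_
          rw [hk1]
          exact Sym2.mem_mk_right _ _
        exact ⟨k-1, by omega, this⟩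
    · have : k = n := by omega
      subst this
      exact absurd ⟨e, he, hfk⟩ hlast
  set N' : Set (Sym2 V) := (M \ F) ∪ (F \ M) with hN'
  have hmatch : IsMatchingIn G N' := by
    constructor
    · rintro e (⟨he, -⟩ | ⟨he, -⟩)
      · exact hsub he
      · exact hFedge he
    · rintro e he e' he' hee' x hx hx'
      rcases he with ⟨heM, heF⟩ | ⟨heF, heM⟩ <;> rcases he' with ⟨heM', heF'⟩ | ⟨heF', heM'⟩
      · exact hdisj e heM e' heM' hee' x hx hx'
      · obtain ⟨l, hl, rfl⟩ := heF'
        rcases Sym2.mem_iff.mp hx' with h | h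
        · rw [h] at hx; exact heF (hcov e heM l (by omega) hx)
        · rw [h] at hx; exact heF (hcov e heM (l+1) (by omega) hx)
      · obtain ⟨k, hk, rfl⟩ := heF
        rcases Sym2.mem_iff.mp hx with h | h
        · rw [h] at hx'; exact heF' (hcov e' heM' k (by omega) hx')
        · rw [h] at hx'; exact heF' (hcov e' heM' (k+1) (by omega) hx')
      · obtain ⟨k, hk, rfl⟩ := heF
        obtain ⟨l, hl, rfl⟩ := heF'
        have hkl : k ≠ l := fun h => hee' (by rw [h])
        have hk2 : ¬ (k % 2 = 1) := fun h => heM ((halt k hk).mpr h)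
        have hl2 : ¬ (l % 2 = 1) := fun h => heM' ((halt l hl).mpr h)
        rcases Sym2.mem_iff.mp hx with h | h <;> rcases Sym2.mem_iff.mp hx' with h' | h'
        · exact hkl (hinj' k l (by omega) (by omega) (h.symm.trans h'))
        · have := hinj' k (l+1) (by omega) (by omega) (h.symm.trans h'); omega
        · have := hinj' (k+1) l (by omega) (by omega) (h.symm.trans h'); omega
        · have := hinj' (k+1) (l+1) (by omega) (by omega) (h.symm.trans h'); omega
  -- cardinality computation
  have hio : Set.InjOn (fun k => s(f k, f (k+1))) {k | k < n ∧ k % 2 = 1} := by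
    intro a ha b hb h
    exact edge_inj a b ha.1 hb.1 h
  have hie : Set.InjOn (fun k => s(f k, f (k+1))) {k | k < n ∧ k % 2 = 0} := by
    intro a ha b hb h
    exact edge_inj a b ha.1 hb.1 h
  have hFM : M ∩ F = (fun k => s(f k, f (k+1))) '' {k | k < n ∧ k % 2 = 1} := by
    ext e
    constructor
    · rintro ⟨heM, k, hk, rfl⟩
      exact ⟨k, ⟨hk, (halt k hk).mp heM⟩, rfl⟩
    · rintro ⟨k, ⟨hk, hk2⟩, rfl⟩
      exact ⟨(halt k hk).mpr hk2, k, hk, rfl⟩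
  have hFnM : F \ M = (fun k => s(f k, f (k+1))) '' {k | k < n ∧ k % 2 = 0} := by
    ext e
    constructor
    · rintro ⟨⟨k, hk, rfl⟩, heM⟩
      refine ⟨k, ⟨hk, ?_⟩, rfl⟩
      have h2 : ¬ (k % 2 = 1) := fun hh => heM ((halt k hk).mpr hh)
      omega
    · rintro ⟨k, ⟨hk, hk2⟩, rfl⟩
      refine ⟨⟨k, hk, rfl⟩, fun hm => ?_⟩
      have := (halt k hk).mp hm
      omega
  have hsetodd : {k | k < n ∧ k % 2 = 1} = ↑((Finset.range n).filter (fun k => k % 2 = 1)) := by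
    ext k; simp [and_comm]
  have hseteven : {k | k < n ∧ k % 2 = 0} = ↑((Finset.range n).filter (fun k => k % 2 = 0)) := by
    ext k; simp [and_comm]
  have hc1 : (M ∩ F).ncard = n / 2 := by
    rw [hFM, Set.ncard_image_of_injOn hio, hsetodd, Set.ncard_coe_finset, card_filter_odd]
  have hc2 : (F \ M).ncard = (n + 1) / 2 := by
    rw [hFnM, Set.ncard_image_of_injOn hie, hseteven, Set.ncard_coe_finset, card_filter_even]
  have hdisj2 : Disjoint (M \ F) (F \ M) := by
    rw [Set.disjoint_left]
    rintro e ⟨-, heF⟩ ⟨heF', -⟩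
    exact heF heF'
  have hcN : N'.ncard = (M \ F).ncard + (n + 1) / 2 := by
    rw [hN', Set.ncard_union_eq hdisj2 (Set.toFinite _) (Set.toFinite _), hc2]
  have hMdecomp : (M \ F).ncard + n / 2 = M.ncard := by
    have h1 : M \ (M ∩ F) = M \ F := by
      ext e; constructor
      · rintro ⟨he, hne⟩; exact ⟨he, fun hf => hne ⟨he, hf⟩⟩
      · rintro ⟨he, hne⟩; exact ⟨he, fun hf => hne hf.2⟩
    have := Set.ncard_diff_add_ncard_of_subset (Set.inter_subset_left : M ∩ F ⊆ M) (Set.toFinite _)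
    rw [h1, hc1] at this
    exact this
  have hle := hM.2 N' hmatch
  omega

/-- A vertex cannot be both evenly and oddly reachable (M maximum, G bipartite). -/
lemma rch_not_both [Finite V] {G : SimpleGraph V} {M : Set (Sym2 V)} {side : V → Bool}
    (hbip : IsBipartiteWith G side) (hM : IsMaxMatching G M) {v : V}
    (h0 : Rch G M v false) (h1 : Rch G M v true) : False := by
  obtain ⟨f, n, ⟨hadjf, haltf, hunf⟩, hfn, hn⟩ := h0
  obtain ⟨g, m, ⟨hadjg, haltg, hung⟩, hgm, hm⟩ := h1
  simp only [if_pos, if_neg Bool.false_ne_true] at hn hm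
  set h : ℕ → V := fun k => if k ≤ m then g k else f (n - (k - m)) with hh
  have hval : ∀ k, m ≤ k → k ≤ m + n → h k = f (n - (k - m)) := by
    intro k hk hk2
    rcases Nat.eq_or_lt_of_le hk with rfl | hlt
    · simp only [hh, le_refl, if_pos]
      rw [Nat.sub_self, Nat.sub_zero, hgm, hfn]
    · simp only [hh, if_neg (by omega : ¬ k ≤ m)]
  have hval2 : ∀ k, k ≤ m → h k = g k := by
    intro k hk; simp [hh, hk]
  have hwalk : AltWalkF G M h (m + n) := by
    refine ⟨?_, ?_, ?_⟩
    · intro k hk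
      rcases Nat.lt_or_ge k m with h' | h'
      · rw [hval2 k (by omega), hval2 (k+1) (by omega)]
        exact hadjg k h'
      · rw [hval k (by omega) (by omega), hval (k+1) (by omega) (by omega)]
        have ht : n - (k + 1 - m) + 1 = n - (k - m) := by omega
        rw [← ht]
        exact (hadjf _ (by omega)).symm
    · intro k hk
      rcases Nat.lt_or_ge k m with h' | h'
      · rw [hval2 k (by omega), hval2 (k+1) (by omega)]
        exact haltg k h'
      · rw [hval k (by omega) (by omega), hval (k+1) (by omega) (by omega)]
        have ht : n - (k + 1 - m) + 1 = n - (k - m) := by omega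
        rw [← ht, Sym2.eq_swap]
        rw [haltf _ (by omega)]
        omega
    · rw [hval2 0 (by omega)]
      exact hung
  obtain ⟨f', n', hw', h0', hl', hpar', hinj'⟩ := walk_splice hbip (m + n) h hwalk
  refine aug_flip hM hw' (by omega) hinj' ?_
  rw [hl', hval (m + n) (by omega) (by omega)]
  simpa using hunf

lemma even_not_odd [Finite V] {G : SimpleGraph V} {M : Set (Sym2 V)} {side : V → Bool}
    (hbip : IsBipartiteWith G side) (hM : IsMaxMatching G M) {v : V}
    (he : EvenVtx G M v) (ho : OddVtx G M v) : False :=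
  rch_not_both hbip hM ((rch_iff_even hbip v).mp he) ((rch_iff_odd hbip v).mp ho)

lemma unmatched_even {G : SimpleGraph V} {M : Set (Sym2 V)} {side : V → Bool}
    (hbip : IsBipartiteWith G side) {v : V} (h : ¬ IsMatchedBy M v) : EvenVtx G M v :=
  (rch_iff_even hbip v).mpr (unmatched_rch h)

/-- Any neighbour of an even vertex is odd. -/
lemma adj_even_odd {G : SimpleGraph V} {M : Set (Sym2 V)} {side : V → Bool}
    (hbip : IsBipartiteWith G side) (hGM : IsMatchingIn G M) {v w : V}
    (hadj : G.Adj v w) (he : EvenVtx G M v) : OddVtx G M w := by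
  rw [rch_iff_odd hbip]
  have h0 := (rch_iff_even hbip v).mp he
  by_cases hm : s(v, w) ∈ M
  · exact rch_trunc hGM h0 hm
  · simpa using rch_ext h0 hadj (by simp [hm])

/-- The matched partner of an odd vertex is even. -/
lemma odd_partner_even {G : SimpleGraph V} {M : Set (Sym2 V)} {side : V → Bool}
    (hbip : IsBipartiteWith G side) (hGM : IsMatchingIn G M) {v w : V}
    (hm : s(v, w) ∈ M) (ho : OddVtx G M v) : EvenVtx G M w := by
  rw [rch_iff_even hbip]
  have h1 := (rch_iff_odd hbip v).mp ho
  have hadj : G.Adj v w := by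
    have := hGM.1 hm
    rwa [SimpleGraph.mem_edgeSet] at this
  simpa using rch_ext h1 hadj (by simp [hm])

/-- Odd vertices are matched (M maximum). -/
lemma odd_matched [Finite V] {G : SimpleGraph V} {M : Set (Sym2 V)} {side : V → Bool}
    (hbip : IsBipartiteWith G side) (hM : IsMaxMatching G M) {v : V}
    (ho : OddVtx G M v) : IsMatchedBy M v := by
  by_contra h
  exact even_not_odd hbip hM (unmatched_even hbip h) ho

/-- Unreachable vertices are matched. -/
lemma unreachable_matched {G : SimpleGraph V} {M : Set (Sym2 V)} {side : V → Bool}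
    (hbip : IsBipartiteWith G side) {v : V}
    (hu : UnreachableVtx G M v) : IsMatchedBy M v := by
  by_contra h
  obtain ⟨u, p, h1, h2, -⟩ := unmatched_even hbip (M := M) (G := G) h
  exact hu ⟨u, p, h1, h2⟩

lemma even_reachable {G : SimpleGraph V} {M : Set (Sym2 V)} {v : V}
    (he : EvenVtx G M v) (hu : UnreachableVtx G M v) : False := by
  obtain ⟨u, p, h1, h2, -⟩ := he
  exact hu ⟨u, p, h1, h2⟩

lemma odd_reachable {G : SimpleGraph V} {M : Set (Sym2 V)} {v : V}
    (ho : OddVtx G M v) (hu : UnreachableVtx G M v) : False := by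
  obtain ⟨u, p, h1, h2, -⟩ := ho
  exact hu ⟨u, p, h1, h2⟩

/-- Every vertex is even, odd, or unreachable. -/
lemma even_or_odd_or_unreachable {G : SimpleGraph V} {M : Set (Sym2 V)} (v : V) :
    EvenVtx G M v ∨ OddVtx G M v ∨ UnreachableVtx G M v := by
  by_cases h : ∃ u p, ¬ IsMatchedBy M u ∧ IsAltPath G M u v p
  · obtain ⟨u, p, h1, h2⟩ := h
    rcases Nat.even_or_odd (pathEdges p).length with hp | hp
    · exact Or.inl ⟨u, p, h1, h2, hp⟩
    · exact Or.inr (Or.inl ⟨u, p, h1, h2, hp⟩)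
  · exact Or.inr (Or.inr h)

lemma sym2_exists_rep (e : Sym2 V) : ∃ a b, e = s(a, b) := by
  induction e using Sym2.ind with
  | _ x y => exact ⟨x, y, rfl⟩

/-- The set of endpoints of a finite set of edges has at most twice as many
elements as there are edges. -/
lemma endpoints_ncard_le [Finite V] :
    ∀ (k : ℕ) (K : Set (Sym2 V)), K.ncard = k →
      {x : V | ∃ e ∈ K, x ∈ e}.ncard ≤ 2 * K.ncard := by
  intro k
  induction k using Nat.strong_induction_on with
  | _ k IH =>
    intro K hcard
    rcases Set.eq_empty_or_nonempty K with rfl | ⟨e, he⟩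
    · simp
    obtain ⟨a, b, rfl⟩ := sym2_exists_rep e
    have hk1 : 0 < k := by
      rw [← hcard]
      exact Set.ncard_pos (Set.toFinite _) |>.mpr ⟨_, he⟩
    set K' := K \ {s(a,b)} with hK'
    have hc' : K'.ncard = k - 1 := by
      rw [hK', Set.ncard_diff_singleton_of_mem he, hcard]
    have hsub : {x : V | ∃ e ∈ K, x ∈ e} ⊆ {x : V | ∃ e ∈ K', x ∈ e} ∪ {a, b} := by
      rintro x ⟨e', he', hx⟩
      by_cases h : e' = s(a, b)
      · subst h
        rcases Sym2.mem_iff.mp hx with rfl | rfl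
        · exact Or.inr (Set.mem_insert _ _)
        · exact Or.inr (Set.mem_insert_of_mem _ rfl)
      · exact Or.inl ⟨e', ⟨he', h⟩, hx⟩
    calc {x : V | ∃ e ∈ K, x ∈ e}.ncard
        ≤ ({x : V | ∃ e ∈ K', x ∈ e} ∪ {a, b}).ncard := Set.ncard_le_ncard hsub (Set.toFinite _)
      _ ≤ {x : V | ∃ e ∈ K', x ∈ e}.ncard + ({a, b} : Set V).ncard := Set.ncard_union_le _ _
      _ ≤ 2 * K'.ncard + 2 := by
          have h1 := IH (k-1) (by omega) K' hc'
          have h2 : ({a, b} : Set V).ncard ≤ 2 := Set.ncard_insert_le _ _ |>.trans (by simp)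
          omega
      _ ≤ 2 * K.ncard := by rw [hc', hcard]; omega

/-- Pairwise-disjoint nonloop edges with all endpoints in `T` : `2|K| ≤ |T|`. -/
lemma two_mul_ncard_le [Finite V] {G : SimpleGraph V} :
    ∀ (k : ℕ) (K : Set (Sym2 V)) (T : Set V), K.ncard = k →
      K ⊆ G.edgeSet →
      (∀ e ∈ K, ∀ e' ∈ K, e ≠ e' → ∀ x ∈ e, x ∉ e') →
      (∀ e ∈ K, ∀ x ∈ e, x ∈ T) →
      2 * K.ncard ≤ T.ncard := by
  intro k
  induction k using Nat.strong_induction_on with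
  | _ k IH =>
    intro K T hcard hsub hdisj hT
    rcases Set.eq_empty_or_nonempty K with rfl | ⟨e, he⟩
    · simp
    obtain ⟨a, b, rfl⟩ := sym2_exists_rep e
    have hk1 : 0 < k := by
      rw [← hcard]
      exact Set.ncard_pos (Set.toFinite _) |>.mpr ⟨_, he⟩
    have hadj : G.Adj a b := by
      have := hsub he
      rwa [SimpleGraph.mem_edgeSet] at this
    have hane : a ≠ b := hadj.ne
    have ha : a ∈ T := hT _ he a (Sym2.mem_mk_left _ _)
    have hb : b ∈ T := hT _ he b (Sym2.mem_mk_right _ _)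
    set K' := K \ {s(a,b)} with hK'
    have hc' : K'.ncard = k - 1 := by
      rw [hK', Set.ncard_diff_singleton_of_mem he, hcard]
    have hTsub : ({a, b} : Set V) ⊆ T := by
      rintro x (rfl | rfl)
      · exact ha
      · exact hb
    have hpair : ({a, b} : Set V).ncard = 2 := Set.ncard_pair hane
    have hdiff := Set.ncard_diff_add_ncard_of_subset hTsub (Set.toFinite _)
    have hIH := IH (k-1) (by omega) K' (T \ {a, b}) hc'
      (fun e' he' => hsub he'.1)
      (fun e' he' e'' he'' hne x hx => hdisj e' he'.1 e'' he''.1 hne x hx)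
      ?_
    · omega
    · rintro e' ⟨he', hne⟩ x hx
      refine ⟨hT e' he' x hx, ?_⟩
      rintro (rfl | rfl)
      · exact hdisj _ he _ he' (fun h => hne h.symm) x (Sym2.mem_mk_left _ _) hx
      · exact hdisj _ he _ he' (fun h => hne h.symm) x (Sym2.mem_mk_right _ _) hx

/-- No maximum matching of `G` contains an edge with one endpoint odd
and the other endpoint odd or unreachable (labels taken with respect to a fixed
maximum matching `M`). -/
theorem no_max_matching_edge_odd_oddUnreachable [Fintype V]
    (G : SimpleGraph V) (side : V → Bool) (hbip : IsBipartiteWith G side)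
    (M : Set (Sym2 V)) (hM : IsMaxMatching G M)
    (N : Set (Sym2 V)) (hN : IsMaxMatching G N) :
    ∀ v w, s(v, w) ∈ N → OddVtx G M v →
      ¬ (OddVtx G M w ∨ UnreachableVtx G M w) := by
  classical
  intro v w hvwN hv hcon
  set OV : Set V := {x | OddVtx G M x} with hOV
  set UV : Set V := {x | UnreachableVtx G M x} with hUV
  have hvw_ne : v ≠ w := by
    have := hN.1.1 hvwN
    rw [SimpleGraph.mem_edgeSet] at this
    exact this.ne
  -- splitting a matching K into edges touching OV and the rest
  set split : Set (Sym2 V) → Set (Sym2 V) := fun K => {e ∈ K | ∃ x, x ∈ e ∧ OddVtx G M x}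
    with hsplit
  -- basic facts about split
  have hsub1 : ∀ K, split K ⊆ K := fun K e he => he.1
  -- the second part of any matching has all endpoints unreachable
  have hK2unreach : ∀ K, IsMatchingIn G K → ∀ e ∈ K \ split K, ∀ x ∈ e, UnreachableVtx G M x := by
    intro K hK e he x hx
    have hnotodd : ∀ y, y ∈ e → ¬ OddVtx G M y := by
      intro y hy hodd
      exact (he.2 ⟨he.1, y, hy, hodd⟩)
    rcases even_or_odd_or_unreachable (G := G) (M := M) x with hex | hox | hux
    · -- x even: its neighbour in e is odd, contradiction
      obtain ⟨a, b, rfl⟩ := sym2_exists_rep e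
      have hadj : G.Adj a b := by
        have := hK.1 he.1
        rwa [SimpleGraph.mem_edgeSet] at this
      rcases Sym2.mem_iff.mp hx with rfl | rfl
      · exact absurd (adj_even_odd hbip hM.1 hadj hex) (hnotodd b (Sym2.mem_mk_right _ _))
      · exact absurd (adj_even_odd hbip hM.1 hadj.symm hex) (hnotodd a (Sym2.mem_mk_left _ _))
    · exact absurd hox (hnotodd x hx)
    · exact hux
  -- |OV| ≤ |split M|
  have hOVle : OV.ncard ≤ (split M).ncard := by
    have hpick : ∀ x ∈ OV, ∃ e, e ∈ split M ∧ x ∈ e := by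
      intro x hx
      obtain ⟨e, heM, hxe⟩ := odd_matched hbip hM hx
      exact ⟨e, ⟨heM, x, hxe, hx⟩, hxe⟩
    set φ : V → Sym2 V := fun x => if h : ∃ e, e ∈ split M ∧ x ∈ e then h.choose else s(v,v)
      with hφ
    refine Set.ncard_le_ncard_of_injOn φ ?_ ?_ (Set.toFinite _)
    · intro x hx
      simp only [hφ]
      rw [dif_pos (hpick x hx)]
      exact (hpick x hx).choose_spec.1
    · intro x hx y hy hxy
      by_contra hne
      simp only [hφ] at hxy
      rw [dif_pos (hpick x hx), dif_pos (hpick y hy)] at hxy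
      have h1 := (hpick x hx).choose_spec
      have h2 := (hpick y hy).choose_spec
      rw [hxy] at h1
      -- x and y both in the same M-edge e
      have he : (hpick y hy).choose ∈ M := h2.1.1
      have heq : (hpick y hy).choose = s(x, y) :=
        Sym2.eq_of_ne_mem hne h1.2 h2.2 (Sym2.mem_mk_left _ _) (Sym2.mem_mk_right _ _)
      rw [heq] at he
      exact even_not_odd hbip hM (odd_partner_even hbip hM.1 he hx) hy
  -- |UV| ≤ 2 |M \ split M|
  have hUVle : UV.ncard ≤ 2 * (M \ split M).ncard := by
    have hsubUV : UV ⊆ {x : V | ∃ e ∈ M \ split M, x ∈ e} := by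
      intro x hx
      obtain ⟨e, heM, hxe⟩ := unreachable_matched hbip hx
      refine ⟨e, ⟨heM, fun hesplit => ?_⟩, hxe⟩
      obtain ⟨-, z, hze, hzodd⟩ := hesplit
      obtain ⟨a, b, rfl⟩ := sym2_exists_rep e
      have hMadj : G.Adj a b := by
        have := hM.1.1 heM
        rwa [SimpleGraph.mem_edgeSet] at this
      -- one endpoint is odd; the other is then even; x is one of them; contradiction
      have hswap : s(b, a) ∈ M := by rwa [Sym2.eq_swap]
      rcases Sym2.mem_iff.mp hze with rfl | rfl <;> rcases Sym2.mem_iff.mp hxe with rfl | rfl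
      · exact odd_reachable hzodd hx
      · exact even_reachable (odd_partner_even hbip hM.1 heM hzodd) hx
      · exact even_reachable (odd_partner_even hbip hM.1 hswap hzodd) hx
      · exact odd_reachable hzodd hx
    calc UV.ncard ≤ {x : V | ∃ e ∈ M \ split M, x ∈ e}.ncard :=
          Set.ncard_le_ncard hsubUV (Set.toFinite _)
      _ ≤ 2 * (M \ split M).ncard := endpoints_ncard_le _ _ rfl
  -- the special edge s(v,w) is in split N
  have hvwsplit : s(v, w) ∈ split N := ⟨hvwN, v, Sym2.mem_mk_left _ _, hv⟩
  -- w is not in any other edge of N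
  have hwnot : ∀ e ∈ N, e ≠ s(v, w) → w ∉ e := by
    intro e he hne hwe
    exact hN.1.2 e he _ hvwN hne w hwe (Sym2.mem_mk_right _ _)
  -- |split N| bound
  have hNpick : ∀ e ∈ split N, ∃ x, x ∈ e ∧ OddVtx G M x := fun e he => he.2
  set ψ : Sym2 V → V := fun e =>
    if e = s(v, w) then v else
      if h : ∃ x, x ∈ e ∧ OddVtx G M x then h.choose else v with hψ
  have hψmem : ∀ e ∈ split N, ψ e ∈ e ∧ OddVtx G M (ψ e) := by
    intro e he
    simp only [hψ]
    by_cases h : e = s(v, w)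
    · rw [if_pos h, h]
      exact ⟨Sym2.mem_mk_left _ _, hv⟩
    · rw [if_neg h, dif_pos (hNpick e he)]
      exact (hNpick e he).choose_spec
  have hψinj : Set.InjOn ψ (split N) := by
    intro a ha b hb hab
    by_contra hne
    have h1 := hψmem a ha
    have h2 := hψmem b hb
    rw [hab] at h1
    exact hN.1.2 a ha.1 b hb.1 hne (ψ b) (hab ▸ h1.1) h2.1
  -- main case split
  rcases hcon with hw | hw
  · -- w odd : split N injects into OV \ {w}
    have hψavoid : ∀ e ∈ split N, ψ e ∈ OV \ {w} := by
      intro e he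
      refine ⟨(hψmem e he).2, ?_⟩
      simp only [Set.mem_singleton_iff]
      intro heq
      by_cases h : e = s(v, w)
      · simp only [hψ] at heq
        rw [if_pos h] at heq
        exact hvw_ne heq
      · exact hwnot e he.1 h (heq ▸ (hψmem e he).1)
    have hN1le : (split N).ncard ≤ (OV \ {w}).ncard :=
      Set.ncard_le_ncard_of_injOn ψ hψavoid hψinj (Set.toFinite _)
    have hOVw : (OV \ {w}).ncard + 1 = OV.ncard :=
      Set.ncard_diff_singleton_add_one hw (Set.toFinite _)
    have hN2le : 2 * (N \ split N).ncard ≤ UV.ncard := by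
      refine two_mul_ncard_le (G := G) _ _ _ rfl (fun e he => hN.1.1 he.1)
        (fun e he e' he' hne x hx => hN.1.2 e he.1 e' he'.1 hne x hx)
        (fun e he x hx => hK2unreach N hN.1 e he x hx)
    have hMsum : (M \ split M).ncard + (split M).ncard = M.ncard :=
      Set.ncard_diff_add_ncard_of_subset (hsub1 M) (Set.toFinite _)
    have hNsum : (N \ split N).ncard + (split N).ncard = N.ncard :=
      Set.ncard_diff_add_ncard_of_subset (hsub1 N) (Set.toFinite _)
    have hMN := hN.2 M hM.1
    have hNM := hM.2 N hN.1
    omega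
  · -- w unreachable
    have hN1le : (split N).ncard ≤ OV.ncard :=
      Set.ncard_le_ncard_of_injOn ψ (fun e he => (hψmem e he).2) hψinj (Set.toFinite _)
    have hN2le : 2 * (N \ split N).ncard ≤ (UV \ {w}).ncard := by
      refine two_mul_ncard_le (G := G) _ _ _ rfl (fun e he => hN.1.1 he.1)
        (fun e he e' he' hne x hx => hN.1.2 e he.1 e' he'.1 hne x hx)
        (fun e he x hx => ?_)
      refine ⟨hK2unreach N hN.1 e he x hx, ?_⟩
      simp only [Set.mem_singleton_iff]
      intro heq
      refine hwnot e he.1 (fun h => ?_) (heq ▸ hx)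
      rw [h] at he
      exact he.2 hvwsplit
    have hUVw : (UV \ {w}).ncard + 1 = UV.ncard :=
      Set.ncard_diff_singleton_add_one hw (Set.toFinite _)
    have hMsum : (M \ split M).ncard + (split M).ncard = M.ncard :=
      Set.ncard_diff_add_ncard_of_subset (hsub1 M) (Set.toFinite _)
    have hNsum : (N \ split N).ncard + (split N).ncard = N.ncard :=
      Set.ncard_diff_add_ncard_of_subset (hsub1 N) (Set.toFinite _)
    have hMN := hN.2 M hM.1
    have hNM := hM.2 N hN.1
    omega
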